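/- arXiv:math/0604474 — 3 statements merged into one kernel-verified Lean document; each statement's English description precedes it below -/
import Mathlib

section
/- Let β > 0, γ > 0, δ be real numbers, let ω be a real number, and let s be a real number with s > |ω|^{1/β} (so that 1 − ω s^{−β} > 0). Then ∫₀^∞ t^{γ−1} e^{−st} E^δ_{β,γ}(ω t^β) dt = s^{−γ} (1 − ω s^{−β})^{−δ}. -/
open Real Set MeasureTheory Filter Polynomial Topology

open Real Set MeasureTheory Filter Polynomial Topology

lemma poch_abs_le (δ : ℝ) (n : ℕ) :
    |(ascPochhammer ℝ n).eval δ| ≤ (ascPochhammer ℝ n).eval (|δ| + 1) := by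
  induction n with
  | zero => simp
  | succ n ih =>
    rw [ascPochhammer_succ_eval, ascPochhammer_succ_eval, abs_mul]
    have h2 : (0:ℝ) < (ascPochhammer ℝ n).eval (|δ| + 1) :=
      ascPochhammer_pos n _ (by positivity)
    have h1 : |δ + (n:ℝ)| ≤ |δ| + 1 + n := by
      calc |δ + (n:ℝ)| ≤ |δ| + |(n:ℝ)| := abs_add_le _ _
        _ ≤ |δ| + 1 + n := by
          rw [Nat.abs_cast]; linarith
    exact mul_le_mul ih h1 (abs_nonneg _) h2.le

lemma summable_poch (d r : ℝ) (hd : 0 < d) (hr0 : 0 < r) (hr1 : r < 1) :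
    Summable (fun n : ℕ => (ascPochhammer ℝ n).eval d * r ^ n / n.factorial) := by
  apply summable_of_ratio_test_tendsto_lt_one hr1
  · filter_upwards with n
    have hE := ascPochhammer_pos n d hd
    have : (0:ℝ) < (ascPochhammer ℝ n).eval d * r ^ n / n.factorial := by positivity
    exact this.ne'
  · have key : ∀ n : ℕ, ‖(ascPochhammer ℝ (n+1)).eval d * r ^ (n+1) / (n+1).factorial‖ /
        ‖(ascPochhammer ℝ n).eval d * r ^ n / n.factorial‖
        = ((d - 1) * (1/((n:ℝ)+1)) + 1) * r := by
      intro n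
      have hE := ascPochhammer_pos n d hd
      have hfac : (0:ℝ) < n.factorial := by positivity
      rw [ascPochhammer_succ_eval, Nat.factorial_succ,
        Real.norm_of_nonneg (by positivity), Real.norm_of_nonneg (by positivity)]
      push_cast
      field_simp
      ring
    have lim : Tendsto (fun n : ℕ => ((d - 1) * (1/((n:ℝ)+1)) + 1) * r) atTop (𝓝 r) := by
      have := ((tendsto_one_div_add_atTop_nhds_zero_nat.const_mul (d-1)).add_const 1).mul_const r
      simpa using this
    exact lim.congr (fun n => (key n).symm)

lemma summable_poch_deriv (d r : ℝ) (hd : 0 < d) (hr0 : 0 < r) (hr1 : r < 1) :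
    Summable (fun n : ℕ => (n:ℝ) * (ascPochhammer ℝ n).eval d * r ^ n / n.factorial) := by
  apply summable_of_ratio_test_tendsto_lt_one hr1
  · filter_upwards [eventually_ge_atTop 1] with n hn
    have hE := ascPochhammer_pos n d hd
    have hn' : (0:ℝ) < n := by exact_mod_cast hn
    have : (0:ℝ) < (n:ℝ) * (ascPochhammer ℝ n).eval d * r ^ n / n.factorial := by positivity
    exact this.ne'
  · have key : ∀ n : ℕ, 1 ≤ n → ‖(((n+1:ℕ)):ℝ) * (ascPochhammer ℝ (n+1)).eval d * r ^ (n+1) / (n+1).factorial‖ /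
        ‖(n:ℝ) * (ascPochhammer ℝ n).eval d * r ^ n / n.factorial‖
        = (d * (1/(n:ℝ)) + 1) * r := by
      intro n hn
      have hE := ascPochhammer_pos n d hd
      have hfac : (0:ℝ) < n.factorial := by positivity
      have hn' : (0:ℝ) < n := by exact_mod_cast hn
      rw [ascPochhammer_succ_eval, Nat.factorial_succ,
        Real.norm_of_nonneg (by positivity), Real.norm_of_nonneg (by positivity)]
      push_cast
      field_simp
      ring
    have lim : Tendsto (fun n : ℕ => (d * (1/(n:ℝ)) + 1) * r) atTop (𝓝 r) := by
      have := ((tendsto_one_div_atTop_nhds_zero_nat.const_mul d).add_const 1).mul_const r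
      simpa using this
    refine lim.congr' ?_
    filter_upwards [eventually_ge_atTop 1] with n hn
    exact (key n hn).symm

lemma binomial_tsum (δ x : ℝ) (hx : |x| < 1) :
    ∑' n : ℕ, (ascPochhammer ℝ n).eval δ * x ^ n / n.factorial = (1 - x) ^ (-δ) := by
  set d : ℝ := |δ| + 1 with hddef
  have hd0 : 0 < d := by positivity
  set r : ℝ := (|x| + 1) / 2 with hrdef
  have hx0 : 0 ≤ |x| := abs_nonneg x
  have hr0 : 0 < r := by rw [hrdef]; linarith
  have hr1 : r < 1 := by rw [hrdef]; linarith
  have hxr : |x| < r := by rw [hrdef]; linarith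
  have hxt : x ∈ Ioo (-r) r := abs_lt.mp hxr |>.imp id id |> fun h => ⟨h.1, h.2⟩
  have h0t : (0:ℝ) ∈ Ioo (-r) r := ⟨by linarith, hr0⟩
  set g : ℕ → ℝ → ℝ := fun n y => (ascPochhammer ℝ n).eval δ * y ^ n / n.factorial with hgdef
  set g' : ℕ → ℝ → ℝ :=
    fun n y => (ascPochhammer ℝ n).eval δ * ((n:ℝ) * y ^ (n-1)) / n.factorial with hg'def
  set u : ℕ → ℝ :=
    fun n => (1/r) * ((n:ℝ) * (ascPochhammer ℝ n).eval d * r ^ n / n.factorial) with hudef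
  have hu : Summable u := (summable_poch_deriv d r hd0 hr0 hr1).mul_left _
  have hgderiv : ∀ (n : ℕ) (y : ℝ), y ∈ Ioo (-r) r → HasDerivAt (g n) (g' n y) y := by
    intro n y _
    exact ((hasDerivAt_pow n y).const_mul ((ascPochhammer ℝ n).eval δ)).div_const _
  have hnr : ∀ n : ℕ, (n:ℝ) * r ^ (n-1) = (1/r) * ((n:ℝ) * r ^ n) := by
    intro n
    cases n with
    | zero => simp
    | succ m =>
      rw [Nat.add_sub_cancel, pow_succ]
      field_simp
  have hgbound : ∀ (n : ℕ) (y : ℝ), y ∈ Ioo (-r) r → ‖g' n y‖ ≤ u n := by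
    intro n y hy
    have hyr : |y| ≤ r := (abs_lt.mpr ⟨hy.1, hy.2⟩).le
    have h1 : ‖g' n y‖ = |(ascPochhammer ℝ n).eval δ| * ((n:ℝ) * |y| ^ (n-1)) / n.factorial := by
      simp [hg'def, Real.norm_eq_abs, abs_mul, abs_div, abs_pow, Nat.abs_cast]
    rw [h1]
    have h2 : |(ascPochhammer ℝ n).eval δ| * ((n:ℝ) * |y| ^ (n-1)) / n.factorial
        ≤ (ascPochhammer ℝ n).eval d * ((n:ℝ) * r ^ (n-1)) / n.factorial := by
      gcongr
      all_goals first
        | exact (abs_nonneg _).trans (poch_abs_le δ n)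
        | exact poch_abs_le δ n
        | exact abs_nonneg y
        | exact mul_nonneg (Nat.cast_nonneg n) (ascPochhammer_pos n d hd0).le
        | positivity
    refine h2.trans (le_of_eq ?_)
    rw [hudef]
    simp only []
    rw [hnr n]
    ring
  have hg0 : Summable (fun n => g n 0) := by
    apply summable_of_ne_finset_zero (s := {0})
    intro n hn
    have : n ≠ 0 := by simpa using hn
    simp [hgdef, zero_pow this]
  have hS : ∀ y ∈ Ioo (-r) r,
      HasDerivAt (fun z => ∑' n, g n z) (∑' n, g' n y) y := fun y hy =>
    hasDerivAt_tsum_of_isPreconnected hu isOpen_Ioo (convex_Ioo _ _).isPreconnected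
      hgderiv hgbound h0t hg0 hy
  -- summabilities at a point of Ioo
  have hsum_g : ∀ y ∈ Ioo (-r) r, Summable (fun n => g n y) := by
    intro y hy
    have hyr : |y| ≤ r := (abs_lt.mpr ⟨hy.1, hy.2⟩).le
    refine Summable.of_norm_bounded (summable_poch d r hd0 hr0 hr1) (fun n => ?_)
    have h1 : ‖g n y‖ = |(ascPochhammer ℝ n).eval δ| * |y| ^ n / n.factorial := by
      simp [hgdef, Real.norm_eq_abs, abs_mul, abs_div, abs_pow, Nat.abs_cast]
    rw [h1]
    gcongr
    all_goals first
      | exact (abs_nonneg _).trans (poch_abs_le δ n)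
      | exact poch_abs_le δ n
      | exact abs_nonneg y
      | exact mul_nonneg (Nat.cast_nonneg n) (ascPochhammer_pos n d hd0).le
      | positivity
  have hsum_g' : ∀ y ∈ Ioo (-r) r, Summable (fun n => g' n y) := fun y hy =>
    Summable.of_norm_bounded hu (fun n => hgbound n y hy)
  have hsum3 : ∀ y ∈ Ioo (-r) r,
      Summable (fun n : ℕ => (n:ℝ) * (ascPochhammer ℝ n).eval δ * y ^ n / n.factorial) := by
    intro y hy
    have hyr : |y| ≤ r := (abs_lt.mpr ⟨hy.1, hy.2⟩).le
    refine Summable.of_norm_bounded (summable_poch_deriv d r hd0 hr0 hr1) (fun n => ?_)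
    have h1 : ‖(n:ℝ) * (ascPochhammer ℝ n).eval δ * y ^ n / n.factorial‖
        = (n:ℝ) * |(ascPochhammer ℝ n).eval δ| * |y| ^ n / n.factorial := by
      simp [Real.norm_eq_abs, abs_mul, abs_div, abs_pow, Nat.abs_cast]
    rw [h1]
    gcongr
    all_goals first
      | exact (abs_nonneg _).trans (poch_abs_le δ n)
      | exact poch_abs_le δ n
      | exact abs_nonneg y
      | exact mul_nonneg (Nat.cast_nonneg n) (ascPochhammer_pos n d hd0).le
      | positivity
  -- key ODE identity
  have hkey : ∀ y ∈ Ioo (-r) r,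
      (1 - y) * (∑' n, g' n y) = δ * ∑' n, g n y := by
    intro y hy
    have S2 := hsum_g' y hy
    have S2' : Summable (fun n => g' (n+1) y) := by
      rw [← summable_nat_add_iff 1] at S2
      exact S2
    have S3 := hsum3 y hy
    have e1 : ∑' n, g' n y = ∑' n, g' (n+1) y := by
      rw [Summable.tsum_eq_zero_add S2]
      simp [hg'def]
    have e2 : ∀ n : ℕ, g' (n+1) y
        = (ascPochhammer ℝ n).eval δ * (δ + n) * y ^ n / n.factorial := by
      intro n
      have h1 : ((n:ℝ)+1) ≠ 0 := by positivity
      have h2 : (n.factorial:ℝ) ≠ 0 := by positivity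
      simp only [hg'def, ascPochhammer_succ_eval, Nat.factorial_succ, Nat.add_sub_cancel]
      push_cast
      field_simp
    have e3 : y * ∑' n, g' n y
        = ∑' n : ℕ, (n:ℝ) * (ascPochhammer ℝ n).eval δ * y ^ n / n.factorial := by
      rw [← tsum_mul_left]
      refine tsum_congr (fun n => ?_)
      cases n with
      | zero => simp [hg'def]
      | succ m =>
        simp only [hg'def, Nat.add_sub_cancel]
        rw [pow_succ]
        push_cast
        ring
    calc (1 - y) * (∑' n, g' n y) = (∑' n, g' n y) - y * (∑' n, g' n y) := by ring
      _ = (∑' n, g' (n+1) y)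
          - ∑' n : ℕ, (n:ℝ) * (ascPochhammer ℝ n).eval δ * y ^ n / n.factorial := by
        rw [← e1, ← e3]
      _ = ∑' n : ℕ, (g' (n+1) y
          - (n:ℝ) * (ascPochhammer ℝ n).eval δ * y ^ n / n.factorial) := by
        rw [Summable.tsum_sub S2' S3]
      _ = ∑' n, δ * g n y := by
        refine tsum_congr (fun n => ?_)
        rw [e2 n]
        simp only [hgdef]
        ring
      _ = δ * ∑' n, g n y := tsum_mul_left
  -- h has zero derivative
  set h : ℝ → ℝ := fun y => (1 - y) ^ δ * ∑' n, g n y with hhdef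
  have hderiv0 : ∀ y ∈ Ioo (-r) r, HasDerivAt h 0 y := by
    intro y hy
    have h1y : 0 < 1 - y := by have := hy.2; linarith
    have hd1 : HasDerivAt (fun z : ℝ => (1-z) ^ δ) (-1 * δ * (1-y) ^ (δ-1)) y :=
      ((hasDerivAt_id y).const_sub 1).rpow_const (Or.inl h1y.ne')
    have hmul := hd1.mul (hS y hy)
    have hpow : (1-y) ^ δ = (1-y) ^ (δ-1) * (1-y) := by
      rw [← Real.rpow_add_one h1y.ne' (δ-1), sub_add_cancel]
    have hzero : -1 * δ * (1-y) ^ (δ-1) * (∑' n, g n y)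
        + (1-y) ^ δ * (∑' n, g' n y) = 0 := by
      rw [hpow, mul_assoc ((1-y) ^ (δ-1)), hkey y hy]
      ring
    rw [hzero] at hmul
    exact hmul
  have hdiff : DifferentiableOn ℝ h (Ioo (-r) r) := fun y hy =>
    (hderiv0 y hy).differentiableAt.differentiableWithinAt
  have hfd : ∀ y ∈ Ioo (-r) r, fderivWithin ℝ h (Ioo (-r) r) y = 0 := by
    intro y hy
    rw [fderivWithin_of_isOpen isOpen_Ioo hy, (hderiv0 y hy).hasFDerivAt.fderiv]
    ext z
    simp
  have hconst : h x = h 0 :=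
    (convex_Ioo (-r) r).is_const_of_fderivWithin_eq_zero hdiff hfd hxt h0t
  have hS0 : (∑' n, g n 0) = 1 := by
    rw [tsum_eq_single 0 (fun n hn => by simp [hgdef, zero_pow hn])]
    simp [hgdef]
  have hh0 : h 0 = 1 := by
    rw [hhdef]
    simp only [sub_zero, Real.one_rpow, one_mul, hS0]
  have h1x : 0 < 1 - x := by
    have := (abs_lt.mp hx).2; linarith
  have hfin : (1 - x) ^ δ * ∑' n, g n x = 1 := by
    have h' := hconst.trans hh0
    simpa only [hhdef] using h'
  rw [Real.rpow_neg h1x.le]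
  exact eq_inv_of_mul_eq_one_left (by rw [mul_comm]; exact hfin)

/-- The generalized (Prabhakar) Mittag-Leffler function (real version)
`E^δ_{α,β}(x) = ∑_{n=0}^∞ (δ)_n x^n / (Γ(nα+β) · n!)` for real `α, β > 0`, `δ, x ∈ ℝ`,
where `(δ)_n` is the Pochhammer symbol and `Γ` is the Gamma function. -/
noncomputable def prabhakarML (α β δ : ℝ) (x : ℝ) : ℝ :=
  ∑' n : ℕ, (ascPochhammer ℝ n).eval δ * x ^ n /
    (Real.Gamma (n * α + β) * (n.factorial : ℝ))

/-- Prabhakar's Laplace transform formula: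
`∫₀^∞ t^{γ−1} e^{−st} E^δ_{β,γ}(ω t^β) dt = s^{−γ} (1 − ω s^{−β})^{−δ}`
for `β, γ > 0`, `δ, ω ∈ ℝ` and `s > |ω|^{1/β}`. -/
theorem prabhakarML_laplace (β γ δ ω s : ℝ) (hβ : 0 < β) (hγ : 0 < γ)
    (hs : s > |ω| ^ (1 / β)) :
    ∫ t in Set.Ioi (0 : ℝ),
        t ^ (γ - 1) * Real.exp (-s * t) * prabhakarML β γ δ (ω * t ^ β)
      = s ^ (-γ) * (1 - ω * s ^ (-β)) ^ (-δ) := by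
  have hω0 : 0 ≤ |ω| ^ (1/β) := Real.rpow_nonneg (abs_nonneg ω) _
  have hs0 : 0 < s := lt_of_le_of_lt hω0 hs
  have hωs : |ω| < s ^ β := by
    have h := Real.rpow_lt_rpow (Real.rpow_nonneg (abs_nonneg ω) _) hs hβ
    rwa [← Real.rpow_mul (abs_nonneg ω), one_div_mul_cancel hβ.ne', Real.rpow_one] at h
  have hsb : 0 < s ^ (-β) := Real.rpow_pos_of_pos hs0 _
  set x : ℝ := ω * s ^ (-β) with hxdef
  have hx1 : |x| < 1 := by
    rw [hxdef, abs_mul, abs_of_pos hsb, Real.rpow_neg hs0.le, ← div_eq_mul_inv,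
      div_lt_one (Real.rpow_pos_of_pos hs0 β)]
    exact hωs
  set a : ℕ → ℝ := fun n => n * β + γ with hadef
  have ha : ∀ n : ℕ, 0 < a n := fun n =>
    add_pos_of_nonneg_of_pos (mul_nonneg (Nat.cast_nonneg n) hβ.le) hγ
  set A : ℕ → ℝ := fun n =>
    (ascPochhammer ℝ n).eval δ * ω ^ n / (Real.Gamma (a n) * n.factorial) with hAdef
  set F : ℕ → ℝ → ℝ := fun n t => A n * (t ^ (a n - 1) * Real.exp (-(s * t))) with hFdef
  have hFint : ∀ n, Integrable (F n) (volume.restrict (Ioi 0)) := by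
    intro n
    apply Integrable.const_mul
    have h := integrableOn_rpow_mul_exp_neg_mul_rpow
      (by linarith [ha n] : (-1:ℝ) < a n - 1) one_pos hs0
    refine (h.congr_fun (fun t ht => ?_) measurableSet_Ioi : IntegrableOn _ _ _)
    beta_reduce
    rw [Real.rpow_one, neg_mul]
  have hval : ∀ n, ∫ t in Ioi 0, t ^ (a n - 1) * Real.exp (-(s * t))
      = (1/s) ^ (a n) * Real.Gamma (a n) :=
    fun n => integral_rpow_mul_exp_neg_mul_Ioi (ha n) hs0
  have hint : ∀ n, ∫ t in Ioi 0, F n t = A n * ((1/s) ^ (a n) * Real.Gamma (a n)) := by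
    intro n
    rw [hFdef]
    simp only [integral_const_mul]
    rw [hval n]
  have hnorm : ∀ n, ∫ t in Ioi 0, ‖F n t‖
      = |A n| * ((1/s) ^ (a n) * Real.Gamma (a n)) := by
    intro n
    rw [← hval n, ← integral_const_mul]
    refine setIntegral_congr_fun measurableSet_Ioi (fun t ht => ?_)
    rw [hFdef]
    simp only [Real.norm_eq_abs, abs_mul]
    rw [abs_of_pos (Real.rpow_pos_of_pos ht _), abs_of_pos (Real.exp_pos _)]
  have hpowa : ∀ n : ℕ, (1/s : ℝ) ^ (a n) = (s ^ (-β)) ^ n * s ^ (-γ) := by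
    intro n
    rw [one_div, Real.inv_rpow hs0.le, ← Real.rpow_neg hs0.le,
      show -(a n) = (-β) * (n:ℝ) + (-γ) by simp only [hadef]; ring,
      Real.rpow_add hs0, Real.rpow_mul hs0.le, Real.rpow_natCast]
  have hterm : ∀ n, A n * ((1/s) ^ (a n) * Real.Gamma (a n))
      = ((ascPochhammer ℝ n).eval δ * x ^ n / n.factorial) * s ^ (-γ) := by
    intro n
    have hΓ : Real.Gamma (a n) ≠ 0 := (Real.Gamma_pos_of_pos (ha n)).ne'
    have hfac : (n.factorial : ℝ) ≠ 0 := by positivity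
    rw [hAdef]
    simp only [hpowa n, hxdef, mul_pow]
    field_simp
  have hsummable : Summable (fun n => ∫ t in Ioi 0, ‖F n t‖) := by
    have hr0 : 0 < (|x| + 1)/2 := by positivity
    have hr1 : (|x| + 1)/2 < 1 := by linarith
    have hxr : |x| ≤ (|x| + 1)/2 := by linarith
    refine Summable.of_nonneg_of_le
      (fun n => integral_nonneg fun t => norm_nonneg _) (fun n => ?_)
      ((summable_poch (|δ| + 1) _ (by positivity) hr0 hr1).mul_right (s ^ (-γ)))
    rw [hnorm n]
    have hposC : 0 < (1/s) ^ (a n) * Real.Gamma (a n) :=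
      mul_pos (Real.rpow_pos_of_pos (by positivity) _) (Real.Gamma_pos_of_pos (ha n))
    rw [← abs_of_pos hposC, ← abs_mul, hterm n, abs_mul, abs_div, abs_mul, abs_pow,
      abs_of_pos (Real.rpow_pos_of_pos hs0 (-γ)), Nat.abs_cast]
    gcongr
    all_goals first
      | exact (abs_nonneg _).trans (poch_abs_le δ n)
      | exact poch_abs_le δ n
      | exact abs_nonneg x
      | positivity
  calc ∫ t in Ioi (0:ℝ), t ^ (γ - 1) * Real.exp (-s * t) * prabhakarML β γ δ (ω * t ^ β)
      = ∫ t in Ioi (0:ℝ), ∑' n, F n t := by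
        refine setIntegral_congr_fun measurableSet_Ioi (fun t ht => ?_)
        rw [prabhakarML, ← tsum_mul_left]
        refine tsum_congr (fun n => ?_)
        have h1 : (ω * t ^ β) ^ n = ω ^ n * t ^ (β * (n:ℝ)) := by
          rw [mul_pow, ← Real.rpow_natCast (t ^ β) n, ← Real.rpow_mul (le_of_lt ht)]
        have h2 : t ^ (a n - 1) = t ^ (γ-1) * t ^ (β * (n:ℝ)) := by
          rw [← Real.rpow_add ht]
          congr 1
          simp only [hadef]
          ring
        rw [hFdef]
        simp only [hAdef, h1, h2, neg_mul]
        ring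
    _ = ∑' n, ∫ t in Ioi (0:ℝ), F n t :=
        (integral_tsum_of_summable_integral_norm hFint hsummable).symm
    _ = ∑' n, ((ascPochhammer ℝ n).eval δ * x ^ n / n.factorial) * s ^ (-γ) :=
        tsum_congr (fun n => by rw [hint n, hterm n])
    _ = (∑' n, (ascPochhammer ℝ n).eval δ * x ^ n / n.factorial) * s ^ (-γ) :=
        tsum_mul_right
    _ = (1 - x) ^ (-δ) * s ^ (-γ) := by rw [binomial_tsum δ x hx1]
    _ = s ^ (-γ) * (1 - x) ^ (-δ) := mul_comm _ _
end

section
/- (Inversion formula D, stated as a forward Laplace transform.) Let α > 0 and a, b be real numbers with a² − 4b > 0, and set λ = (−a + √(a²−4b))/2 and μ = (−a − √(a²−4b))/2, the real and distinct roots of x² + a x + b = 0. Then for every real s > 0 with s^α > max(|λ|, |μ|), ∫₀^∞ e^{−st} (1/√(a²−4b)) · [ (λ+a) E_α(λ t^α) − (μ+a) E_α(μ t^α) ] dt = (s^{2α−1} + a s^{α−1}) / (s^{2α} + a s^α + b). -/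
open MeasureTheory Set Filter

lemma my_Gamma_ratio {α y : ℝ} (hα : 0 < α) (hy : 1 < y) :
    Real.Gamma y * (y - 1) ^ α ≤ Real.Gamma (y + α) := by
  have h0 : (0:ℝ) < y - 1 := by linarith
  have hy0 : (0:ℝ) < y := by linarith
  have hslope := Real.convexOn_log_Gamma.slope_mono_adjacent
      (mem_Ioi.mpr h0) (mem_Ioi.mpr (by linarith : (0:ℝ) < y + α))
      (by linarith : y - 1 < y) (by linarith : y < y + α)
  have hrec : Real.Gamma y = (y - 1) * Real.Gamma (y - 1) := by
    have := Real.Gamma_add_one (s := y - 1) h0.ne'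
    simpa using this
  have hGy : 0 < Real.Gamma y := Real.Gamma_pos_of_pos hy0
  have hGy1 : 0 < Real.Gamma (y - 1) := Real.Gamma_pos_of_pos h0
  have hGya : 0 < Real.Gamma (y + α) := Real.Gamma_pos_of_pos (by linarith)
  have hnum : (Real.log ∘ Real.Gamma) y - (Real.log ∘ Real.Gamma) (y - 1) = Real.log (y - 1) := by
    simp only [Function.comp_apply, hrec, Real.log_mul h0.ne' hGy1.ne']
    ring
  rw [show y - (y - 1) = 1 by ring, show y + α - y = α by ring, div_one, hnum] at hslope
  have key : Real.log (Real.Gamma y) + α * Real.log (y - 1) ≤ Real.log (Real.Gamma (y + α)) := by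
    rw [le_div_iff₀ hα] at hslope
    simp only [Function.comp_apply] at hslope
    nlinarith [hslope]
  calc Real.Gamma y * (y - 1) ^ α
      = Real.exp (Real.log (Real.Gamma y) + α * Real.log (y - 1)) := by
        rw [Real.rpow_def_of_pos h0, Real.exp_add, Real.exp_log hGy, mul_comm α]
    _ ≤ Real.Gamma (y + α) := by
        rw [← Real.exp_log hGya]
        exact Real.exp_le_exp.mpr key

lemma my_summable_ml (α : ℝ) (hα : 0 < α) (z : ℝ) :
    Summable fun n : ℕ => z ^ n / Real.Gamma (n * α + 1) := by
  apply summable_of_ratio_norm_eventually_le (r := 1/2) (by norm_num)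
  have hc : (0:ℝ) < 2 * |z| + 1 := by positivity
  have hgrow : ∀ᶠ n : ℕ in atTop, (2 * |z| + 1 : ℝ) ≤ (n * α) ^ α := by
    obtain ⟨N, hN⟩ := exists_nat_ge (((2 * |z| + 1) ^ α⁻¹) / α + 1)
    filter_upwards [eventually_ge_atTop N] with n hn
    have h1 : ((2 * |z| + 1) ^ α⁻¹ : ℝ) ≤ n * α := by
      have h2 : (N:ℝ) ≤ n := Nat.cast_le.mpr hn
      have h3 := mul_le_mul_of_nonneg_right (hN.trans h2) hα.le
      rw [add_mul, div_mul_cancel₀ _ hα.ne'] at h3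
      linarith
    calc (2 * |z| + 1 : ℝ) = (((2 * |z| + 1) ^ α⁻¹) ^ α) :=
          (Real.rpow_inv_rpow hc.le hα.ne').symm
      _ ≤ ((n:ℝ) * α) ^ α := Real.rpow_le_rpow (by positivity) h1 hα.le
  filter_upwards [hgrow, eventually_ge_atTop 1] with n hn hn1
  have hn1' : (1:ℝ) ≤ n := by exact_mod_cast hn1
  have hy : (1:ℝ) < n * α + 1 := by nlinarith
  have hG : 0 < Real.Gamma ((n:ℝ) * α + 1) := Real.Gamma_pos_of_pos (by linarith)
  have hG2 : 0 < Real.Gamma (((n:ℕ)+1 : ℕ) * α + 1) := by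
    apply Real.Gamma_pos_of_pos; positivity
  have h2 : Real.Gamma ((n:ℝ) * α + 1) * (2 * |z| + 1)
      ≤ Real.Gamma ((((n:ℕ)+1 : ℕ) : ℝ) * α + 1) := by
    have he : ((n:ℝ)) * α + 1 + α = (((n:ℕ)+1 : ℕ) : ℝ) * α + 1 := by push_cast; ring
    rw [← he]
    calc Real.Gamma ((n:ℝ)*α+1) * (2*|z|+1)
        ≤ Real.Gamma ((n:ℝ)*α+1) * ((n:ℝ)*α+1-1) ^ α := by
          apply mul_le_mul_of_nonneg_left _ hG.le
          simpa using hn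
      _ ≤ _ := my_Gamma_ratio hα hy
  rw [norm_div, norm_div, norm_pow, norm_pow, Real.norm_eq_abs, Real.norm_eq_abs,
    Real.norm_eq_abs, abs_of_pos hG, abs_of_pos hG2]
  rw [show (1:ℝ)/2 * (|z|^n / Real.Gamma ((n:ℝ)*α+1))
      = (1/2 * |z|^n)/Real.Gamma ((n:ℝ)*α+1) by ring, div_le_div_iff₀ hG2 hG]
  have hp : (0:ℝ) ≤ |z|^n := by positivity
  nlinarith [pow_succ |z| n, abs_nonneg z, hG.le]

lemma my_integrable_term {β s : ℝ} (hβ : 0 ≤ β) (hs : 0 < s) :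
    IntegrableOn (fun t : ℝ => t ^ β * Real.exp (-(s * t))) (Ioi 0) := by
  have h := Real.GammaIntegral_convergent (by linarith : (0:ℝ) < β + 1)
  rw [show (0:ℝ) = s * 0 by ring, ← integrableOn_Ioi_comp_mul_left_iff _ _ hs] at h
  refine IntegrableOn.congr_fun (h.const_mul ((1/s) ^ β)) (fun t ht => ?_) measurableSet_Ioi
  have ht0 : (0:ℝ) < t := ht
  simp only [add_sub_cancel_right]
  rw [Real.mul_rpow hs.le ht0.le, one_div, Real.inv_rpow hs.le]
  field_simp

lemma my_integral_term {β s : ℝ} (hβ : 0 ≤ β) (hs : 0 < s) :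
    ∫ t in Ioi 0, t ^ β * Real.exp (-(s * t)) = (1/s) ^ (β+1) * Real.Gamma (β+1) := by
  have h := Real.integral_rpow_mul_exp_neg_mul_Ioi (by linarith : (0:ℝ) < β+1) hs
  rw [add_sub_cancel_right] at h
  exact h



/-- The two-parameter Mittag-Leffler function
`E_{α,β}(x) = ∑_{n=0}^∞ x^n / Γ(nα+β)` for real `α, β > 0`. -/
noncomputable def mittagLeffler (α β : ℝ) (x : ℝ) : ℝ :=
  ∑' n : ℕ, x ^ n / Real.Gamma (n * α + β)

/-- Inversion formula (D) as a forward Laplace transform: for `α > 0`, `a² − 4b > 0`,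
roots `λ, μ` of `x² + ax + b = 0`, and `s > 0` with `s^α > max(|λ|,|μ|)`,
`∫₀^∞ e^{−st} (1/√(a²−4b))·[(λ+a) E_α(λ t^α) − (μ+a) E_α(μ t^α)] dt
  = (s^{2α−1} + a s^{α−1})/(s^{2α} + a s^α + b)`. -/
theorem laplace_inversion_D (α a b s : ℝ) (hα : 0 < α) (hd : 0 < a ^ 2 - 4 * b)
    (hs : 0 < s)
    (hroot : s ^ α > max |(-a + Real.sqrt (a ^ 2 - 4 * b)) / 2|
                        |(-a - Real.sqrt (a ^ 2 - 4 * b)) / 2|) :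
    ∫ t in Set.Ioi (0 : ℝ), Real.exp (-s * t) * (1 / Real.sqrt (a ^ 2 - 4 * b)) *
        (((-a + Real.sqrt (a ^ 2 - 4 * b)) / 2 + a) *
            mittagLeffler α 1 ((-a + Real.sqrt (a ^ 2 - 4 * b)) / 2 * t ^ α)
          - ((-a - Real.sqrt (a ^ 2 - 4 * b)) / 2 + a) *
            mittagLeffler α 1 ((-a - Real.sqrt (a ^ 2 - 4 * b)) / 2 * t ^ α))
      = (s ^ (2 * α - 1) + a * s ^ (α - 1)) / (s ^ (2 * α) + a * s ^ α + b) := by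
  have hr : 0 < Real.sqrt (a ^ 2 - 4 * b) := Real.sqrt_pos.mpr hd
  have hr2 : Real.sqrt (a ^ 2 - 4 * b) ^ 2 = a ^ 2 - 4 * b := Real.sq_sqrt hd.le
  set r := Real.sqrt (a ^ 2 - 4 * b) with hrdef
  set l := (-a + r) / 2 with hldef
  set m := (-a - r) / 2 with hmdef
  set X := s ^ α with hXdef
  have hX : 0 < X := Real.rpow_pos_of_pos hs α
  have hl : |l| < X := (le_max_left _ _).trans_lt hroot
  have hm : |m| < X := (le_max_right _ _).trans_lt hroot
  have hXl : 0 < X - l := by have := (abs_lt.mp hl).2; linarith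
  have hXm : 0 < X - m := by have := (abs_lt.mp hm).2; linarith
  set k : ℕ → ℝ := fun n =>
    1/r * ((l + a) * l ^ n - (m + a) * m ^ n) / Real.Gamma (n * α + 1) with hkdef
  set F : ℕ → ℝ → ℝ := fun n t => k n * (t ^ ((n:ℝ) * α) * Real.exp (-(s * t))) with hFdef
  have hGpos : ∀ n : ℕ, 0 < Real.Gamma ((n:ℝ) * α + 1) := fun n =>
    Real.Gamma_pos_of_pos (by positivity)
  -- pointwise identity
  have hpt : ∀ t ∈ Ioi (0:ℝ),
      Real.exp (-s * t) * (1 / r) *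
        ((l + a) * mittagLeffler α 1 (l * t ^ α)
          - (m + a) * mittagLeffler α 1 (m * t ^ α)) = ∑' n, F n t := by
    intro t ht
    have ht0 : (0:ℝ) < t := ht
    have hpow : ∀ (c : ℝ) (n : ℕ), (c * t ^ α) ^ n = c ^ n * t ^ ((n:ℝ) * α) := by
      intro c n
      rw [mul_pow, ← Real.rpow_natCast (t ^ α) n, ← Real.rpow_mul ht0.le, mul_comm α]
    have hsum : ∀ c : ℝ,
        Summable fun n : ℕ => c ^ n * t ^ ((n:ℝ)*α) / Real.Gamma (n*α+1) := by
      intro c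
      refine (my_summable_ml α hα (c * t ^ α)).congr fun n => ?_
      rw [hpow]
    have hml : ∀ c : ℝ, mittagLeffler α 1 (c * t ^ α)
        = ∑' n : ℕ, c ^ n * t ^ ((n:ℝ)*α) / Real.Gamma ((n:ℝ)*α+1) := by
      intro c
      exact tsum_congr fun n => by rw [hpow]
    rw [hml, hml, ← tsum_mul_left, ← tsum_mul_left,
      ← Summable.tsum_sub ((hsum l).mul_left _) ((hsum m).mul_left _), ← tsum_mul_left]
    refine tsum_congr fun n => ?_
    simp only [hFdef, hkdef, neg_mul]
    field_simp [(hGpos n).ne']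
  -- integrability of terms
  have hInt : ∀ n : ℕ, Integrable (F n) (volume.restrict (Ioi 0)) := fun n =>
    (my_integrable_term (by positivity : (0:ℝ) ≤ (n:ℝ)*α) hs).const_mul (k n)
  -- value of term integrals
  have hval : ∀ n : ℕ, ∫ t in Ioi 0, F n t
      = (1/r) * ((l + a) * (l * X⁻¹) ^ n - (m + a) * (m * X⁻¹) ^ n) * (1/s) := by
    intro n
    have h1 : ∫ t in Ioi 0, F n t
        = k n * ((1/s) ^ ((n:ℝ)*α+1) * Real.Gamma ((n:ℝ)*α+1)) := by
      simp only [hFdef]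
      rw [MeasureTheory.integral_const_mul,
        my_integral_term (by positivity : (0:ℝ) ≤ (n:ℝ)*α) hs]
    rw [h1, hkdef]
    have h2 : ((1:ℝ)/s) ^ ((n:ℝ)*α+1) = (X⁻¹) ^ n * (1/s) := by
      rw [Real.rpow_add (by positivity), Real.rpow_one, mul_comm (n:ℝ) α,
        Real.rpow_mul (by positivity), Real.rpow_natCast, hXdef, one_div,
        ← Real.inv_rpow hs.le]
    rw [h2]
    have hg := (hGpos n).ne'
    field_simp
    ring
  -- norms of term integrals
  have hnormval : ∀ n : ℕ, ∫ t in Ioi 0, ‖F n t‖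
      = |k n| * ((1/s) ^ ((n:ℝ)*α+1) * Real.Gamma ((n:ℝ)*α+1)) := by
    intro n
    have : ∀ t ∈ Ioi (0:ℝ), ‖F n t‖ = |k n| * (t ^ ((n:ℝ)*α) * Real.exp (-(s*t))) := by
      intro t ht
      have ht0 : (0:ℝ) < t := ht
      rw [hFdef, Real.norm_eq_abs, abs_mul,
        abs_of_pos (show (0:ℝ) < t ^ ((n:ℝ)*α) * Real.exp (-(s*t)) by positivity)]
    rw [setIntegral_congr_fun measurableSet_Ioi this, MeasureTheory.integral_const_mul,
      my_integral_term (by positivity : (0:ℝ) ≤ (n:ℝ)*α) hs]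
  -- summability of norm integrals
  have hq1 : |l| * X⁻¹ < 1 := by
    have := (div_lt_one hX).mpr hl; rwa [div_eq_mul_inv] at this
  have hq2 : |m| * X⁻¹ < 1 := by
    have := (div_lt_one hX).mpr hm; rwa [div_eq_mul_inv] at this
  have hsumnorm : Summable fun n : ℕ => ∫ t in Ioi 0, ‖F n t‖ := by
    have hmaj : Summable fun n : ℕ =>
        (1/r) * ((|l| + |a|) * (|l| * X⁻¹) ^ n + (|m| + |a|) * (|m| * X⁻¹) ^ n) * (1/s) := by
      apply Summable.mul_right
      apply Summable.mul_left
      exact ((summable_geometric_of_lt_one (by positivity) hq1).mul_left _).add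
        ((summable_geometric_of_lt_one (by positivity) hq2).mul_left _)
    refine Summable.of_nonneg_of_le (fun n => ?_) (fun n => ?_) hmaj
    · rw [hnormval]; positivity
    · rw [hnormval n, hkdef]
      have hg := hGpos n
      have h2 : ((1:ℝ)/s) ^ ((n:ℝ)*α+1) = (X⁻¹) ^ n * (1/s) := by
        rw [Real.rpow_add (by positivity), Real.rpow_one, mul_comm (n:ℝ) α,
          Real.rpow_mul (by positivity), Real.rpow_natCast, hXdef, one_div,
          ← Real.inv_rpow hs.le]
      rw [h2]
      have habs : |1/r * ((l + a) * l ^ n - (m + a) * m ^ n) / Real.Gamma ((n:ℝ)*α+1)|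
          = 1/r * |(l + a) * l ^ n - (m + a) * m ^ n| / Real.Gamma ((n:ℝ)*α+1) := by
        rw [abs_div, abs_mul, abs_of_pos hg, abs_of_pos (by positivity : (0:ℝ) < 1/r)]
      rw [habs]
      have hC : |(l + a) * l ^ n - (m + a) * m ^ n|
          ≤ (|l| + |a|) * |l| ^ n + (|m| + |a|) * |m| ^ n := by
        calc |(l + a) * l ^ n - (m + a) * m ^ n|
            ≤ |(l + a) * l ^ n| + |(m + a) * m ^ n| := abs_sub _ _
          _ ≤ (|l| + |a|) * |l| ^ n + (|m| + |a|) * |m| ^ n := by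
              rw [abs_mul, abs_mul, abs_pow, abs_pow]
              gcongr <;> exact abs_add_le _ _
      have hXin : (0:ℝ) ≤ X⁻¹ := by positivity
      calc 1/r * |(l + a) * l ^ n - (m + a) * m ^ n| / Real.Gamma ((n:ℝ)*α+1)
            * ((X⁻¹) ^ n * (1/s) * Real.Gamma ((n:ℝ)*α+1))
          = 1/r * (|(l + a) * l ^ n - (m + a) * m ^ n| * (X⁻¹) ^ n) * (1/s) := by
            field_simp
        _ ≤ 1/r * (((|l| + |a|) * |l| ^ n + (|m| + |a|) * |m| ^ n) * (X⁻¹) ^ n) * (1/s) := by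
            gcongr
        _ = (1/r) * ((|l| + |a|) * (|l| * X⁻¹) ^ n + (|m| + |a|) * (|m| * X⁻¹) ^ n) * (1/s) := by
            rw [mul_pow, mul_pow]; ring
  -- swap integral and sum
  have hswap := integral_tsum_of_summable_integral_norm hInt hsumnorm
  have hlhs : ∫ t in Ioi (0:ℝ), Real.exp (-s * t) * (1 / r) *
        ((l + a) * mittagLeffler α 1 (l * t ^ α)
          - (m + a) * mittagLeffler α 1 (m * t ^ α))
      = ∑' n, ∫ t in Ioi 0, F n t := by
    rw [setIntegral_congr_fun measurableSet_Ioi hpt, ← hswap]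
  rw [hlhs]
  -- evaluate the sum
  have hgl : Summable fun n : ℕ => (l * X⁻¹) ^ n :=
    summable_geometric_of_norm_lt_one (by
      rw [Real.norm_eq_abs, abs_mul, abs_of_pos (by positivity : (0:ℝ) < X⁻¹)]; exact hq1)
  have hgm : Summable fun n : ℕ => (m * X⁻¹) ^ n :=
    summable_geometric_of_norm_lt_one (by
      rw [Real.norm_eq_abs, abs_mul, abs_of_pos (by positivity : (0:ℝ) < X⁻¹)]; exact hq2)
  have hsumval : ∑' n, ∫ t in Ioi 0, F n t
      = (1/r) * ((l + a) * (1 - l * X⁻¹)⁻¹ - (m + a) * (1 - m * X⁻¹)⁻¹) * (1/s) := by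
    rw [tsum_congr hval]
    rw [show (fun n : ℕ => (1/r) * ((l + a) * (l * X⁻¹) ^ n - (m + a) * (m * X⁻¹) ^ n) * (1/s))
      = fun n : ℕ => ((1/r) * (1/s)) * ((l + a) * (l * X⁻¹) ^ n - (m + a) * (m * X⁻¹) ^ n)
      from funext fun n => by ring]
    rw [tsum_mul_left, Summable.tsum_sub (hgl.mul_left _) (hgm.mul_left _),
      tsum_mul_left, tsum_mul_left, tsum_geometric_of_norm_lt_one (by
        rw [Real.norm_eq_abs, abs_mul, abs_of_pos (by positivity : (0:ℝ) < X⁻¹)]; exact hq1),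
      tsum_geometric_of_norm_lt_one (by
        rw [Real.norm_eq_abs, abs_mul, abs_of_pos (by positivity : (0:ℝ) < X⁻¹)]; exact hq2)]
    ring
  rw [hsumval]
  -- final algebra
  have hb : b = (a ^ 2 - r ^ 2) / 4 := by linarith
  have h2a : s ^ (2*α) = X ^ 2 := by
    rw [two_mul, Real.rpow_add hs, hXdef, sq]
  have h2a1 : s ^ (2*α - 1) = X ^ 2 / s := by
    rw [Real.rpow_sub hs, Real.rpow_one, h2a]
  have ha1 : s ^ (α - 1) = X / s := by
    rw [Real.rpow_sub hs, Real.rpow_one, hXdef]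
  rw [h2a, h2a1, ha1]
  have e1 : 1 - l * X⁻¹ = (X - l)/X := by field_simp
  have e2 : 1 - m * X⁻¹ = (X - m)/X := by field_simp
  rw [e1, e2, inv_div, inv_div]
  have hlm : X ^ 2 + a * X + b = (X - l) * (X - m) := by
    rw [hb, hldef, hmdef]; ring
  rw [hlm]
  have key : (l + a) * (X / (X - l)) - (m + a) * (X / (X - m))
      = r * (X + a) * X / ((X - l) * (X - m)) := by
    rw [mul_div_assoc', mul_div_assoc', div_sub_div _ _ hXl.ne' hXm.ne',
      div_eq_div_iff (mul_ne_zero hXl.ne' hXm.ne') (mul_ne_zero hXl.ne' hXm.ne')]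
    rw [hldef, hmdef]
    ring
  rw [key]
  field_simp
end

section
/- (Inversion formula E, stated as a forward Laplace transform.) Let α > 0 and a, b be real numbers with a² − 4b > 0, and set λ = (−a + √(a²−4b))/2 and μ = (−a − √(a²−4b))/2, the real and distinct roots of x² + a x + b = 0. Then for every real s > 0 with s^α > max(|λ|, |μ|), ∫₀^∞ e^{−st} (t^{α−1}/(λ−μ)) · [ E_{α,α}(λ t^α) − E_{α,α}(μ t^α) ] dt = 1 / (s^{2α} + a s^α + b). -/
open Real Filter MeasureTheory Set


lemma fact_le_Gamma {y : ℝ} (hy : 2 ≤ y) : ((Nat.floor y - 1).factorial : ℝ) ≤ Real.Gamma y := by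
  have h2 : 2 ≤ Nat.floor y := Nat.le_floor (by exact_mod_cast hy)
  have hcast : ((Nat.floor y - 1 : ℕ) : ℝ) + 1 = (Nat.floor y : ℝ) := by
    have h1 : 1 ≤ Nat.floor y := by omega
    push_cast [h1]; ring
  have hmono : Real.Gamma (Nat.floor y) ≤ Real.Gamma y := by
    rcases eq_or_lt_of_le (Nat.floor_le (by linarith : (0:ℝ) ≤ y) : (Nat.floor y : ℝ) ≤ y) with h | h
    · rw [h]
    · exact (Real.Gamma_strictMonoOn_Ici (Set.mem_Ici.mpr (by exact_mod_cast h2)) hy h).le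
  calc ((Nat.floor y - 1).factorial : ℝ) = Real.Gamma ((Nat.floor y - 1 : ℕ) + 1) :=
        (Real.Gamma_nat_eq_factorial _).symm
    _ = Real.Gamma (Nat.floor y) := by rw [hcast]
    _ ≤ Real.Gamma y := hmono

lemma summable_mlSeries (α β : ℝ) (hα : 0 < α) (x : ℝ) :
    Summable fun n : ℕ => x ^ n / Real.Gamma (n * α + β) := by
  set c : ℝ := max |x| 1 with hc
  have hc1 : (1:ℝ) ≤ c := le_max_right _ _
  have hc0 : (0:ℝ) < c := lt_of_lt_of_le one_pos hc1
  set d : ℝ := c ^ (α⁻¹ : ℝ) with hd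
  have hd1 : (1:ℝ) ≤ d := Real.one_le_rpow hc1 (by positivity)
  have hd0 : (0:ℝ) < d := lt_of_lt_of_le one_pos hd1
  set θ : ℝ := (2:ℝ) ^ (-(α⁻¹) : ℝ) with hθ
  have hθ0 : (0:ℝ) < θ := Real.rpow_pos_of_pos two_pos _
  have hθ1 : θ < 1 :=
    Real.rpow_lt_one_of_one_lt_of_neg one_lt_two (neg_lt_zero.mpr (by positivity))
  have hθα : θ ^ α = 1/2 := by
    rw [hθ, ← Real.rpow_mul (by norm_num : (0:ℝ) ≤ 2)]
    rw [show -(α⁻¹) * α = -1 by field_simp]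
    rw [Real.rpow_neg_one]; norm_num
  -- eventually d^m / m! ≤ θ^m
  have hev : ∀ᶠ m : ℕ in atTop, d ^ m / (m.factorial : ℝ) ≤ θ ^ m := by
    have hsum : Summable fun m : ℕ => (d/θ)^m / (m.factorial : ℝ) :=
      Real.summable_pow_div_factorial _
    have h0 := hsum.tendsto_atTop_zero
    filter_upwards [h0.eventually (eventually_le_nhds (by norm_num : (0:ℝ) < 1))] with m hm
    have hfpos : (0:ℝ) < m.factorial := by positivity
    have : (d/θ)^m / (m.factorial:ℝ) ≤ 1 := hm
    have hdm : d ^ m = (d/θ)^m * θ^m := by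
      rw [div_pow, div_mul_cancel₀]; positivity
    rw [hdm]
    calc (d/θ)^m * θ^m / m.factorial = ((d/θ)^m / m.factorial) * θ^m := by ring
      _ ≤ 1 * θ^m := by
          apply mul_le_mul_of_nonneg_right this (by positivity)
      _ = θ^m := one_mul _
  obtain ⟨M, hM⟩ := eventually_atTop.mp hev
  -- the function n ↦ n*α + β tends to infinity
  have hy : Tendsto (fun n : ℕ => (n:ℝ)*α + β) atTop atTop := by
    apply tendsto_atTop_add_const_right
    exact Tendsto.atTop_mul_const hα tendsto_natCast_atTop_atTop
  have hev2 : ∀ᶠ n : ℕ in atTop, (M:ℝ) + 3 ≤ (n:ℝ)*α + β ∧ (3:ℝ) ≤ (n:ℝ)*α + β := by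
    filter_upwards [hy.eventually_ge_atTop ((M:ℝ)+3), hy.eventually_ge_atTop 3] with n h1 h2
    exact ⟨h1, h2⟩
  set K : ℝ := d ^ ((2:ℝ) - β) with hK
  have hK0 : 0 < K := Real.rpow_pos_of_pos hd0 _
  apply Summable.of_norm_bounded_eventually_nat (g := fun n => (K * θ^(β - 2)) * (1/2:ℝ)^n)
  · exact ((summable_geometric_of_lt_one (by norm_num) (by norm_num)).mul_left _)
  · filter_upwards [hev2] with n ⟨hn1, hn2⟩
    set y : ℝ := (n:ℝ)*α + β with hyd
    set m : ℕ := Nat.floor y - 1 with hm'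
    have hy3 : (3:ℝ) ≤ y := hn2
    have hfl2 : 2 ≤ Nat.floor y := Nat.le_floor (by exact_mod_cast (by linarith : (2:ℝ) ≤ y))
    have hmy : (m:ℝ) ≥ y - 2 := by
      have h1 : (Nat.floor y : ℝ) > y - 1 := Nat.sub_one_lt_floor y
      have : (m:ℝ) = (Nat.floor y : ℝ) - 1 := by
        rw [hm']; push_cast [show 1 ≤ Nat.floor y by omega]; ring
      linarith
    have hym : y ≤ (m:ℝ) + 2 := by
      have h1 : (y:ℝ) < Nat.floor y + 1 := Nat.lt_floor_add_one y
      have : (m:ℝ) = (Nat.floor y : ℝ) - 1 := by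
        rw [hm']; push_cast [show 1 ≤ Nat.floor y by omega]; ring
      linarith
    have hmM : M ≤ m := by
      have : (M:ℝ) + 1 ≤ (m:ℝ) := by linarith
      exact_mod_cast le_trans (by linarith : (M:ℝ) ≤ (m:ℝ)) le_rfl
    have hGpos : 0 < Real.Gamma y := Real.Gamma_pos_of_pos (by linarith)
    have hfG : ((m.factorial : ℝ)) ≤ Real.Gamma y := fact_le_Gamma (by linarith)
    have hfpos : (0:ℝ) < m.factorial := by positivity
    -- |x|^n ≤ K * d^m
    have hxc : |x| ≤ c := le_max_left _ _
    have hcn : c ^ n = d ^ ((n:ℝ) * α) := by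
      rw [hd, ← Real.rpow_natCast c n, ← Real.rpow_mul hc0.le]
      congr 1; field_simp
    have hstep : |x| ^ n ≤ K * d ^ m := by
      calc |x| ^ n ≤ c ^ n := pow_le_pow_left₀ (abs_nonneg x) hxc n
        _ = d ^ ((n:ℝ) * α) := hcn
        _ ≤ d ^ ((m:ℝ) + 2 - β) := by
            apply Real.rpow_le_rpow_of_exponent_le hd1
            have : (n:ℝ) * α = y - β := by rw [hyd]; ring
            linarith
        _ = K * d ^ m := by
            rw [hK, ← Real.rpow_natCast d m, ← Real.rpow_add hd0]
            congr 1; ring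
    -- the norm bound
    have hnorm : ‖x ^ n / Real.Gamma ((n:ℝ) * α + β)‖ = |x|^n / Real.Gamma y := by
      rw [Real.norm_eq_abs, abs_div, abs_pow, abs_of_pos hGpos]
    rw [hnorm]
    calc |x|^n / Real.Gamma y ≤ (K * d^m) / (m.factorial : ℝ) := by
          apply div_le_div₀ (by positivity) hstep hfpos hfG
      _ = K * (d^m / m.factorial) := by ring
      _ ≤ K * θ^m := by
          apply mul_le_mul_of_nonneg_left (hM m hmM) hK0.le
      _ ≤ K * θ^(y - 2) := by
          apply mul_le_mul_of_nonneg_left _ hK0.le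
          rw [← Real.rpow_natCast θ m]
          exact Real.rpow_le_rpow_of_exponent_ge hθ0 hθ1.le (by linarith)
      _ = (K * θ^(β-2)) * (1/2:ℝ)^n := by
          rw [show y - 2 = (β - 2) + (n:ℝ)*α by rw [hyd]; ring,
            Real.rpow_add hθ0, ← hθα, ← Real.rpow_natCast (θ^α) n,
            ← Real.rpow_mul hθ0.le]
          ring_nf

lemma term_int (α s C : ℝ) (hα : 0 < α) (hs : 0 < s) (n : ℕ) :
    (IntegrableOn (fun t : ℝ => C * (t ^ (((n:ℝ)+1)*α - 1) * Real.exp (-(s*t)))) (Ioi 0)) ∧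
    ∫ t in Ioi 0, C * (t ^ (((n:ℝ)+1)*α - 1) * Real.exp (-(s*t)))
      = C * (Real.Gamma (((n:ℝ)+1)*α) * ((s ^ α)⁻¹) ^ (n+1)) := by
  have he : (0:ℝ) < ((n:ℝ)+1)*α := by positivity
  constructor
  · have h := integrableOn_rpow_mul_exp_neg_mul_rpow
      (show (-1:ℝ) < ((n:ℝ)+1)*α - 1 by linarith) (p := 1) one_pos hs
    simp only [Real.rpow_one, neg_mul] at h
    exact h.const_mul C
  · rw [MeasureTheory.integral_const_mul, integral_rpow_mul_exp_neg_mul_Ioi he hs]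
    congr 1
    rw [mul_comm]
    congr 1
    rw [one_div, Real.inv_rpow hs.le, ← Real.rpow_natCast ((s^α)⁻¹) (n+1),
      ← Real.rpow_neg hs.le, ← Real.rpow_neg hs.le, ← Real.rpow_mul hs.le]
    congr 1
    push_cast
    ring

/-- Inversion formula (E) as a forward Laplace transform: for `α > 0`, `a² − 4b > 0`,
roots `λ, μ` of `x² + ax + b = 0`, and `s > 0` with `s^α > max(|λ|,|μ|)`,
`∫₀^∞ e^{−st} (t^{α−1}/(λ−μ))·[E_{α,α}(λ t^α) − E_{α,α}(μ t^α)] dt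
  = 1/(s^{2α} + a s^α + b)`. -/
theorem laplace_inversion_E (α a b s : ℝ) (hα : 0 < α) (hd : 0 < a ^ 2 - 4 * b)
    (hs : 0 < s)
    (hroot : s ^ α > max |(-a + Real.sqrt (a ^ 2 - 4 * b)) / 2|
                        |(-a - Real.sqrt (a ^ 2 - 4 * b)) / 2|) :
    ∫ t in Set.Ioi (0 : ℝ), Real.exp (-s * t) *
        (t ^ (α - 1) /
          ((-a + Real.sqrt (a ^ 2 - 4 * b)) / 2 - (-a - Real.sqrt (a ^ 2 - 4 * b)) / 2)) *
        (mittagLeffler α α ((-a + Real.sqrt (a ^ 2 - 4 * b)) / 2 * t ^ α)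
          - mittagLeffler α α ((-a - Real.sqrt (a ^ 2 - 4 * b)) / 2 * t ^ α))
      = 1 / (s ^ (2 * α) + a * s ^ α + b) := by
  have hD0 : 0 < Real.sqrt (a ^ 2 - 4 * b) := Real.sqrt_pos.mpr hd
  set D : ℝ := Real.sqrt (a ^ 2 - 4 * b) with hDdef
  set lam : ℝ := (-a + D) / 2 with hlam
  set mu : ℝ := (-a - D) / 2 with hmu
  have hsub : lam - mu = D := by rw [hlam, hmu]; ring
  rw [hsub]
  have hS : 0 < s ^ α := Real.rpow_pos_of_pos hs α
  have hlamS : |lam| < s ^ α := lt_of_le_of_lt (le_max_left _ _) hroot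
  have hmuS : |mu| < s ^ α := lt_of_le_of_lt (le_max_right _ _) hroot
  set q : ℝ := (s ^ α)⁻¹ with hq
  have hq0 : 0 < q := inv_pos.mpr hS
  have hlq : |lam| * q < 1 := by
    rw [hq, ← div_eq_mul_inv]; exact (div_lt_one hS).mpr hlamS
  have hmq : |mu| * q < 1 := by
    rw [hq, ← div_eq_mul_inv]; exact (div_lt_one hS).mpr hmuS
  have hD2 : D^2 = a^2 - 4*b := Real.sq_sqrt hd.le
  have hab : lam + mu = -a := by rw [hlam, hmu]; ring
  have hbb : lam * mu = b := by
    rw [hlam, hmu]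
    have h4 : (-a + D)/2 * ((-a - D)/2) = (a^2 - D^2)/4 := by ring
    rw [h4, hD2]; ring
  clear_value D lam mu q
  set F : ℕ → ℝ → ℝ := fun n t =>
    ((lam ^ n - mu ^ n) / (D * Real.Gamma (((n:ℝ)+1)*α))) *
      (t ^ (((n:ℝ)+1)*α - 1) * Real.exp (-(s*t))) with hF
  have hGpos : ∀ n : ℕ, 0 < Real.Gamma (((n:ℝ)+1)*α) :=
    fun n => Real.Gamma_pos_of_pos (by positivity)
  have hint : ∀ n, IntegrableOn (F n) (Ioi 0) := fun n => (term_int α s _ hα hs n).1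
  have hval : ∀ n, ∫ t in Ioi 0, F n t = ((lam ^ n - mu ^ n) / D) * q ^ (n+1) := by
    intro n
    rw [hF]
    rw [(term_int α s _ hα hs n).2, ← hq]
    have := (hGpos n).ne'
    field_simp
  have hnormval : ∀ n, ∫ t in Ioi 0, ‖F n t‖ = (|lam ^ n - mu ^ n| / D) * q ^ (n+1) := by
    intro n
    have hcong : ∀ t ∈ Ioi (0:ℝ), ‖F n t‖ =
        (|lam ^ n - mu ^ n| / (D * Real.Gamma (((n:ℝ)+1)*α))) *
          (t ^ (((n:ℝ)+1)*α - 1) * Real.exp (-(s*t))) := by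
      intro t ht
      have ht0 : (0:ℝ) < t := ht
      rw [hF]
      simp only [Real.norm_eq_abs, abs_mul, abs_div]
      rw [abs_of_pos hD0, abs_of_pos (hGpos n),
        abs_of_nonneg (by positivity : (0:ℝ) ≤ t ^ (((n:ℝ)+1)*α - 1)),
        abs_of_nonneg (Real.exp_nonneg _)]
    rw [setIntegral_congr_fun measurableSet_Ioi hcong, (term_int α s _ hα hs n).2, ← hq]
    have := (hGpos n).ne'
    field_simp
  have hb : Summable fun n : ℕ => (q/D) * ((|lam| * q)^n + (|mu| * q)^n) :=
    ((summable_geometric_of_lt_one (by positivity) hlq).add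
        (summable_geometric_of_lt_one (by positivity) hmq)).mul_left _
  have hle : ∀ n : ℕ, (|lam ^ n - mu ^ n| / D) * q ^ (n+1)
      ≤ (q/D) * ((|lam| * q)^n + (|mu| * q)^n) := by
    intro n
    have h1 : |lam ^ n - mu ^ n| ≤ |lam|^n + |mu|^n := by
      calc |lam ^ n - mu ^ n| ≤ |lam ^ n| + |mu ^ n| := abs_sub _ _
        _ = |lam|^n + |mu|^n := by rw [abs_pow, abs_pow]
    calc (|lam ^ n - mu ^ n| / D) * q ^ (n+1)
        ≤ ((|lam|^n + |mu|^n) / D) * q ^ (n+1) := by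
          gcongr
      _ = (q/D) * ((|lam| * q)^n + (|mu| * q)^n) := by
          rw [mul_pow, mul_pow, pow_succ]; ring
  have hsum0 : Summable fun n : ℕ => (|lam ^ n - mu ^ n| / D) * q ^ (n+1) :=
    Summable.of_nonneg_of_le (fun n => by positivity) hle hb
  have hsumnorm : Summable fun n => ∫ t in Ioi 0, ‖F n t‖ :=
    hsum0.congr (fun n => (hnormval n).symm)
  have hpt : ∀ t ∈ Ioi (0:ℝ),
      Real.exp (-s*t) * (t^(α-1)/D) *
        (mittagLeffler α α (lam * t^α) - mittagLeffler α α (mu * t^α)) = ∑' n, F n t := by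
    intro t ht
    have ht0 : (0:ℝ) < t := ht
    have hs1 : Summable fun n : ℕ => (lam * t^α)^n / Real.Gamma (n*α+α) :=
      summable_mlSeries α α hα _
    have hs2 : Summable fun n : ℕ => (mu * t^α)^n / Real.Gamma (n*α+α) :=
      summable_mlSeries α α hα _
    rw [mittagLeffler, mittagLeffler, ← Summable.tsum_sub hs1 hs2, ← tsum_mul_left]
    apply tsum_congr
    intro n
    rw [hF]
    dsimp only
    have h1 : (t^α)^n = t^(α*(n:ℝ)) := by
      rw [← Real.rpow_natCast (t^α) n, ← Real.rpow_mul ht0.le]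
    have h2 : Real.Gamma ((n:ℝ)*α+α) = Real.Gamma (((n:ℝ)+1)*α) := by
      rw [show ((n:ℝ)+1)*α = (n:ℝ)*α+α from by ring]
    have h3 : t ^ (((n:ℝ)+1)*α - 1) = t^(α-1) * t^(α*(n:ℝ)) := by
      rw [← Real.rpow_add ht0]; congr 1; ring
    rw [mul_pow, mul_pow, h1, h2, h3, neg_mul, ← neg_mul]
    ring
  rw [setIntegral_congr_fun measurableSet_Ioi hpt,
    ← MeasureTheory.integral_tsum_of_summable_integral_norm hint hsumnorm]
  rw [tsum_congr hval]
  -- compute the sum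
  have hgl : Summable fun n : ℕ => (lam * q)^n :=
    summable_geometric_of_norm_lt_one (by rw [Real.norm_eq_abs, abs_mul, abs_of_pos hq0]; exact hlq)
  have hgm : Summable fun n : ℕ => (mu * q)^n :=
    summable_geometric_of_norm_lt_one (by rw [Real.norm_eq_abs, abs_mul, abs_of_pos hq0]; exact hmq)
  have hre : ∀ n : ℕ, ((lam ^ n - mu ^ n) / D) * q ^ (n+1)
      = (q/D) * ((lam*q)^n - (mu*q)^n) := by
    intro n; rw [mul_pow, mul_pow, pow_succ]; ring
  rw [tsum_congr hre, tsum_mul_left, Summable.tsum_sub hgl hgm,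
    tsum_geometric_of_norm_lt_one (by rw [Real.norm_eq_abs, abs_mul, abs_of_pos hq0]; exact hlq),
    tsum_geometric_of_norm_lt_one (by rw [Real.norm_eq_abs, abs_mul, abs_of_pos hq0]; exact hmq)]
  -- final algebra
  have hlmne : s ^ α - lam ≠ 0 := by
    have : lam ≤ |lam| := le_abs_self _
    intro h; nlinarith
  have hmune : s ^ α - mu ≠ 0 := by
    have : mu ≤ |mu| := le_abs_self _
    intro h; nlinarith
  have h1l : 1 - lam * q ≠ 0 := by
    rw [hq]
    intro h
    apply hlmne
    have : (s^α) * (1 - lam * (s^α)⁻¹) = s^α - lam := by field_simp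
    rw [← this, h, mul_zero]
  have h1m : 1 - mu * q ≠ 0 := by
    rw [hq]
    intro h
    apply hmune
    have : (s^α) * (1 - mu * (s^α)⁻¹) = s^α - mu := by field_simp
    rw [← this, h, mul_zero]
  have h2α : s ^ (2*α) = s^α * s^α := by rw [two_mul, Real.rpow_add hs]
  rw [h2α, hq]
  rw [show s^α*s^α + a*(s^α) + b = (s^α - lam)*(s^α - mu) by
    rw [← hbb]; linear_combination (s^α) * hab]
  rw [hq] at h1l h1m
  field_simp
  linear_combination hsub
end
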